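/- With f_n and s_n^{(k)} as defined by their closed formulas, s_n^{(2)}(q) − s_n^{(1)}(q) = f_{2n+1}(q) for all n ≥ 0. -/

import Mathlib

open Polynomial Finset

/-- The Hall polynomials `f_n(q)`: `f_n = Σ_{i=1}^n (-1)^{i-1}(2i-1) q^{n+1-i} + (-1)^n (n+1)`
for `n ≥ 1`, `f_0 = 1`, and `f_n = 0` for `n < 0`. -/
noncomputable def hallF (n : ℤ) : Polynomial ℤ :=
  if n < 0 then 0
  else if n = 0 then 1
  else ∑ i ∈ Finset.Icc 1 n.toNat, Polynomial.C ((-1 : ℤ) ^ (i - 1) * (2 * i - 1)) *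
        Polynomial.X ^ (n.toNat + 1 - i) + Polynomial.C ((-1 : ℤ) ^ n.toNat * (n.toNat + 1))

/-- The polynomials `s_n^{(k)}(q) = Σ_{i=1}^{2n+k-1} (-1)^{i-1} i q^{2n+k-i} - (-1)^k (n+1)`
for `n ≥ 1`, with the conventions `s_0^{(k)} = (q-1)^{k-1}` (for `k ≥ 1`) and `s_{-1}^{(k)} = 0`. -/
noncomputable def hallS (n : ℤ) (k : ℕ) : Polynomial ℤ :=
  if n < 0 then 0
  else if n = 0 then (Polynomial.X - 1) ^ (k - 1)
  else ∑ i ∈ Finset.Icc 1 (2 * n.toNat + k - 1), Polynomial.C ((-1 : ℤ) ^ (i - 1) * i) *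
        Polynomial.X ^ (2 * n.toNat + k - i) - Polynomial.C ((-1 : ℤ) ^ k * (n.toNat + 1))

lemma sumIcc_one (m : ℕ) (f : ℕ → Polynomial ℤ) :
    ∑ i ∈ Finset.Icc 1 m, f i = ∑ i ∈ Finset.range m, f (1 + i) := by
  rw [← Finset.Ico_add_one_right_eq_Icc, Finset.sum_Ico_eq_sum_range]
  simp

/-- `s_n^{(2)} - s_n^{(1)} = f_{2n+1}` for all `n ≥ 0`. -/
theorem hallS_two_sub_one_eq_f (n : ℕ) :
    hallS (n : ℤ) 2 - hallS (n : ℤ) 1 = hallF (2 * (n : ℤ) + 1) := by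
  rcases Nat.eq_zero_or_pos n with h0 | hpos
  · subst h0
    simp only [hallS, hallF, Nat.cast_zero]
    norm_num [sumIcc_one]
    ring
  · have h1 : ¬ ((n : ℤ) < 0) := by omega
    have h2 : (n : ℤ) ≠ 0 := by exact_mod_cast hpos.ne'
    have h3 : ¬ (2 * (n : ℤ) + 1 < 0) := by omega
    have h4 : 2 * (n : ℤ) + 1 ≠ 0 := by omega
    simp only [hallS, hallF, if_neg h1, if_neg h2, if_neg h3, if_neg h4,
      Int.toNat_natCast]
    have h5 : (2 * (n : ℤ) + 1).toNat = 2 * n + 1 := by omega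
    rw [h5]
    have e1 : 2 * n + 2 - 1 = 2 * n + 1 := by omega
    have e2 : 2 * n + 1 - 1 = 2 * n := by omega
    rw [e1, e2, sumIcc_one, sumIcc_one, sumIcc_one]
    simp only [Nat.add_sub_cancel_left, Nat.cast_add, Nat.cast_one]
    simp only [← Nat.sub_sub]
    norm_num
    have key : (∑ x ∈ Finset.range (2 * n + 1),
          (-1 : Polynomial ℤ) ^ x * (1 + (x : Polynomial ℤ)) * Polynomial.X ^ (2 * n + 1 - x)) -
        (∑ x ∈ Finset.range (2 * n),
          (-1 : Polynomial ℤ) ^ x * (1 + (x : Polynomial ℤ)) * Polynomial.X ^ (2 * n - x)) =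
        ∑ x ∈ Finset.range (2 * n + 1),
          (-1 : Polynomial ℤ) ^ x * (2 * (1 + (x : Polynomial ℤ)) - 1) * Polynomial.X ^ (2 * n + 1 - x) := by
      rw [Finset.sum_range_succ' (fun x => (-1 : Polynomial ℤ) ^ x * (1 + (x : Polynomial ℤ)) *
            Polynomial.X ^ (2 * n + 1 - x)) (2 * n),
          Finset.sum_range_succ' (fun x => (-1 : Polynomial ℤ) ^ x * (2 * (1 + (x : Polynomial ℤ)) - 1) *
            Polynomial.X ^ (2 * n + 1 - x)) (2 * n),
          add_sub_right_comm, ← Finset.sum_sub_distrib]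
      congr 1
      · refine Finset.sum_congr rfl fun x hx => ?_
        have he : 2 * n + 1 - (x + 1) = 2 * n - x := by omega
        rw [he, ← sub_mul]
        congr 1
        push_cast
        rw [pow_succ]
        ring
      · norm_num
    linear_combination key + (2 * (n : Polynomial ℤ) + 2) *
      (Even.neg_one_pow (even_two_mul n) : ((-1 : Polynomial ℤ)) ^ (2 * n) = 1)
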